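/- arXiv:1402.5230 — 2 statements merged into one kernel-verified Lean document; each statement's English description precedes it below -/
import Mathlib

section
/- For an (n−1)-times differentiable function f and any natural number k ≤ n−1, the k-th derivative of x ↦ f(x²) is given by (d/dx)^k [f(x²)] = k! · Σ_{j=0}^{⌊k/2⌋} (2x)^{k−2j} / (j! (k−2j)!) · f^{(k−j)}(x²). -/
open Finset

/-- coefficient `k!/(j!(k-2j)!)` (0 when `2j > k`). -/
noncomputable def sqC (k j : ℕ) : ℝ :=
  if 2 * j ≤ k then (k.factorial : ℝ) / (j.factorial * (k - 2 * j).factorial) else 0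

lemma sqC_zero (k : ℕ) : sqC k 0 = 1 := by
  simp [sqC, Nat.factorial_ne_zero,
    div_self (by exact_mod_cast (Nat.factorial_ne_zero k) : ((k.factorial : ℝ)) ≠ 0)]

lemma sqC_of_gt {k j : ℕ} (h : k < 2 * j) : sqC k j = 0 := by
  simp [sqC, Nat.not_le.mpr h]

lemma sqC_key (k i : ℕ) :
    sqC (k + 1) (i + 1) = sqC k (i + 1) + 2 * ((k - 2 * i : ℕ) : ℝ) * sqC k i := by
  have hfi : ((i.factorial : ℝ)) ≠ 0 := by exact_mod_cast i.factorial_ne_zero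
  rcases le_or_gt (2 * i + 2) k with h1 | h1
  · -- 2(i+1) ≤ k
    obtain ⟨p, rfl⟩ : ∃ p, k = 2 * i + 2 + p := ⟨k - (2 * i + 2), by omega⟩
    have e1 : 2 * i + 2 + p + 1 - 2 * (i + 1) = p + 1 := by omega
    have e2 : 2 * i + 2 + p - 2 * (i + 1) = p := by omega
    have e3 : 2 * i + 2 + p - 2 * i = p + 2 := by omega
    rw [sqC, sqC, sqC, if_pos (by omega), if_pos (by omega), if_pos (by omega), e1, e2, e3]
    have hp2 : (p + 2).factorial = (p + 2) * ((p + 1) * p.factorial) := by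
      rw [show p + 2 = p + 1 + 1 by omega, Nat.factorial_succ, Nat.factorial_succ]
    rw [Nat.factorial_succ (2 * i + 2 + p), Nat.factorial_succ i, Nat.factorial_succ p, hp2]
    have hfp : ((p.factorial : ℝ)) ≠ 0 := by exact_mod_cast p.factorial_ne_zero
    have hfk : (((2 * i + 2 + p).factorial : ℝ)) ≠ 0 := by
      exact_mod_cast (2 * i + 2 + p).factorial_ne_zero
    push_cast
    field_simp
    ring
  · rcases le_or_gt (2 * i) k with h2 | h2
    · -- k = 2i or k = 2i+1
      rcases (by omega : k = 2 * i ∨ k = 2 * i + 1) with rfl | rfl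
      · -- k = 2i : LHS 0? 2(i+1) ≤ 2i+1 false, so LHS = 0; RHS: sqC k (i+1)=0, (k-2i)=0
        rw [sqC_of_gt (by omega), sqC_of_gt (by omega)]
        simp
      · -- k = 2i+1
        rw [sqC_of_gt (show 2 * i + 1 < 2 * (i + 1) by omega)]
        rw [sqC, sqC, if_pos (by omega), if_pos (by omega)]
        have e1 : 2 * i + 1 + 1 - 2 * (i + 1) = 0 := by omega
        have e2 : 2 * i + 1 - 2 * i = 1 := by omega
        rw [e1, e2]
        have hk1 : (2 * i + 1 + 1).factorial = (2 * i + 2) * (2 * i + 1).factorial := by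
          rw [show 2 * i + 1 + 1 = (2 * i + 1) + 1 by omega, Nat.factorial_succ]
        rw [hk1, Nat.factorial_succ i]
        have hfk : (((2 * i + 1).factorial : ℝ)) ≠ 0 := by
          exact_mod_cast (2 * i + 1).factorial_ne_zero
        push_cast
        field_simp
        ring
    · -- k < 2i
      rw [sqC_of_gt (by omega : k < 2 * (i + 1)), sqC_of_gt (by omega : k + 1 < 2 * (i + 1))]
      have : k - 2 * i = 0 := by omega
      rw [this]
      simp
open Finset

lemma sq_sum_step (k : ℕ) (x : ℝ) (D : ℕ → ℝ) :
    ∑ j ∈ range (k + 1), sqC k j *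
      ((↑(k - 2 * j) * (2 * x) ^ (k - 2 * j - 1) * 2) * D (k - j)
        + (2 * x) ^ (k - 2 * j) * (D (k - j + 1) * (2 * x)))
    = ∑ j ∈ range (k + 2), sqC (k + 1) j * ((2 * x) ^ (k + 1 - 2 * j) * D (k + 1 - j)) := by
  -- split LHS
  have lsplit : ∑ j ∈ range (k + 1), sqC k j *
      ((↑(k - 2 * j) * (2 * x) ^ (k - 2 * j - 1) * 2) * D (k - j)
        + (2 * x) ^ (k - 2 * j) * (D (k - j + 1) * (2 * x)))
      = (∑ j ∈ range (k + 1), sqC k j * ((2 * x) ^ (k + 1 - 2 * j) * D (k + 1 - j)))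
        + ∑ j ∈ range (k + 1),
            2 * ((k - 2 * j : ℕ) : ℝ) * sqC k j *
              ((2 * x) ^ (k + 1 - 2 * (j + 1)) * D (k + 1 - (j + 1))) := by
    rw [← Finset.sum_add_distrib]
    refine Finset.sum_congr rfl ?_
    intro j hj
    have hj' : j ≤ k := by simpa using Nat.lt_succ_iff.mp (Finset.mem_range.mp hj)
    have eD : k + 1 - (j + 1) = k - j := by omega
    rw [eD]
    rcases le_or_gt (2 * j) k with h | h
    · -- nonzero regime
      rcases eq_or_lt_of_le h with heq | hlt
      · -- 2j = k : the A-term vanishes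
        have e0 : k - 2 * j = 0 := by omega
        have e1 : k + 1 - 2 * j = 1 := by omega
        have e2 : k - j + 1 = k + 1 - j := by omega
        rw [e0, e1, e2]
        push_cast
        ring
      · have e1 : k - 2 * j + 1 = k + 1 - 2 * j := by omega
        have e2 : k - j + 1 = k + 1 - j := by omega
        have e3 : k + 1 - 2 * (j + 1) = k - 2 * j - 1 := by omega
        rw [e3, ← e1, ← e2, pow_succ]
        ring
    · -- sqC k j = 0 and (k - 2j) = 0
      rw [sqC_of_gt h]
      have : k - 2 * j = 0 := by omega
      rw [this]
      simp
  rw [lsplit]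
  -- rewrite RHS via shift
  rw [Finset.sum_range_succ' (fun j => sqC (k + 1) j * ((2 * x) ^ (k + 1 - 2 * j) * D (k + 1 - j))) (k + 1)]
  simp only [sqC_key k]
  rw [show (∑ j ∈ range (k + 1),
        (sqC k (j + 1) + 2 * ((k - 2 * j : ℕ) : ℝ) * sqC k j) *
          ((2 * x) ^ (k + 1 - 2 * (j + 1)) * D (k + 1 - (j + 1))))
      = (∑ j ∈ range (k + 1),
          sqC k (j + 1) * ((2 * x) ^ (k + 1 - 2 * (j + 1)) * D (k + 1 - (j + 1))))
        + ∑ j ∈ range (k + 1),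
            2 * ((k - 2 * j : ℕ) : ℝ) * sqC k j *
              ((2 * x) ^ (k + 1 - 2 * (j + 1)) * D (k + 1 - (j + 1)))
      from by rw [← Finset.sum_add_distrib]; exact Finset.sum_congr rfl fun j _ => by ring]
  have hshift : (∑ j ∈ range (k + 1),
        sqC k (j + 1) * ((2 * x) ^ (k + 1 - 2 * (j + 1)) * D (k + 1 - (j + 1))))
      + sqC (k + 1) 0 * ((2 * x) ^ (k + 1 - 2 * 0) * D (k + 1 - 0))
      = ∑ j ∈ range (k + 1), sqC k j * ((2 * x) ^ (k + 1 - 2 * j) * D (k + 1 - j)) := by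
    have := Finset.sum_range_succ'
      (fun j => sqC k j * ((2 * x) ^ (k + 1 - 2 * j) * D (k + 1 - j))) (k + 1)
    rw [Finset.sum_range_succ] at this
    rw [sqC_zero] at this ⊢
    -- this : ∑_{range(k+2)} = ∑_{range(k+1)} shifted + first
    -- ∑_{range(k+2)} = ∑_{range(k+1)} + last, last has sqC k (k+1) = 0
    have hlast : sqC k (k + 1) = 0 := sqC_of_gt (by omega)
    rw [hlast] at this
    simp only [zero_mul, add_zero] at this
    -- done
    linarith [this]
  linarith [hshift]

lemma iteratedDeriv_comp_sq_aux (N : ℕ) (f : ℝ → ℝ) (hf : ContDiff ℝ (N : ℕ∞) f) :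
    ∀ k, k ≤ N → ∀ x, iteratedDeriv k (fun y => f (y ^ 2)) x
      = ∑ j ∈ range (k + 1),
          sqC k j * ((2 * x) ^ (k - 2 * j) * iteratedDeriv (k - j) f (x ^ 2)) := by
  intro k
  induction k with
  | zero =>
      intro _ x
      simp [sqC_zero]
  | succ k IH =>
      intro hk x
      have hk' : k ≤ N := by omega
      have hfun : iteratedDeriv k (fun y => f (y ^ 2))
          = fun x => ∑ j ∈ range (k + 1),
              sqC k j * ((2 * x) ^ (k - 2 * j) * iteratedDeriv (k - j) f (x ^ 2)) :=
        funext (IH hk')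
      rw [iteratedDeriv_succ, hfun]
      have hder : HasDerivAt (fun y => ∑ j ∈ range (k + 1),
            sqC k j * ((2 * y) ^ (k - 2 * j) * iteratedDeriv (k - j) f (y ^ 2)))
          (∑ j ∈ range (k + 1),
            sqC k j * ((↑(k - 2 * j) * (2 * x) ^ (k - 2 * j - 1) * 2)
                * iteratedDeriv (k - j) f (x ^ 2)
              + (2 * x) ^ (k - 2 * j) * (iteratedDeriv (k - j + 1) f (x ^ 2) * (2 * x)))) x := by
        apply HasDerivAt.fun_sum
        intro j hj
        have hmul : HasDerivAt (fun y : ℝ => 2 * y) 2 x := by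
          simpa using (hasDerivAt_id x).const_mul (2 : ℝ)
        have hu : HasDerivAt (fun y : ℝ => (2 * y) ^ (k - 2 * j))
            (↑(k - 2 * j) * (2 * x) ^ (k - 2 * j - 1) * 2) x := by
          simpa [Function.comp_def] using (hasDerivAt_pow (k - 2 * j) (2 * x)).comp x hmul
        have hdiff : Differentiable ℝ (iteratedDeriv (k - j) f) := by
          apply hf.differentiable_iteratedDeriv
          exact_mod_cast Nat.cast_lt.mpr (show k - j < N by omega)
        have hd : HasDerivAt (iteratedDeriv (k - j) f)
            (iteratedDeriv (k - j + 1) f (x ^ 2)) (x ^ 2) := by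
          rw [iteratedDeriv_succ]
          exact (hdiff (x ^ 2)).hasDerivAt
        have hv : HasDerivAt (fun y : ℝ => iteratedDeriv (k - j) f (y ^ 2))
            (iteratedDeriv (k - j + 1) f (x ^ 2) * (2 * x)) x := by
          have h := HasDerivAt.comp (h := fun y : ℝ => y ^ 2) x hd (hasDerivAt_pow 2 x)
          simpa [Function.comp_def] using h
        exact (hu.mul hv).const_mul (sqC k j)
      rw [hder.deriv]
      have := sq_sum_step k x (fun m => iteratedDeriv m f (x ^ 2))
      simpa using this

/-- `(d/dx)^k [f(x²)] = k! · Σ_{j=0}^{⌊k/2⌋} (2x)^{k−2j} / (j! (k−2j)!) · f^{(k−j)}(x²)`. -/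
theorem iteratedDeriv_comp_sq (n : ℕ) (f : ℝ → ℝ)
    (hf : ContDiff ℝ ((n - 1 : ℕ) : ℕ∞) f) (k : ℕ) (hk : k ≤ n - 1) (x : ℝ) :
    iteratedDeriv k (fun y => f (y ^ 2)) x =
      (k.factorial : ℝ) * ∑ j ∈ Finset.range (k / 2 + 1),
        (2 * x) ^ (k - 2 * j) / ((j.factorial : ℝ) * ((k - 2 * j).factorial : ℝ)) *
          iteratedDeriv (k - j) f (x ^ 2) := by
  rw [iteratedDeriv_comp_sq_aux (n - 1) f hf k hk x, Finset.mul_sum]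
  rw [← Finset.sum_subset (Finset.range_subset_range.mpr (by omega : k / 2 + 1 ≤ k + 1))]
  · exact Finset.sum_congr rfl fun j hj => by
      have h2j : 2 * j ≤ k := by
        have := Finset.mem_range.mp hj; omega
      rw [sqC, if_pos h2j]
      ring
  · intro j hj hj'
    have h1 : k / 2 + 1 ≤ j := by
      by_contra h
      exact hj' (Finset.mem_range.mpr (by omega))
    have : k < 2 * j := by omega
    rw [sqC_of_gt this, zero_mul]
end

section
/- Define the difference operators Δ_{P,n}^{(α,β;0)} := P_n^{(α,β)} and Δ_{P,n}^{(α,β;ℓ+1)} := Δ_{P,n+1}^{(α,β;ℓ)} − Δ_{P,n}^{(α,β;ℓ)}, with Δ_{P,n}^{(α,β;−1)} ≡ 0. Then for all ℓ ≥ 0 and n ≥ 1: (n+1)·Δ_{P,n}^{(α,β;ℓ+1)}(x) + ℓ·Δ_{P,n+1}^{(α,β;ℓ)}(x) + ℓ(1−x)·Δ_{P,n+1}^{(α+1,β;ℓ−1)}(x) + (n + (α+β)/2 + 1)(1−x)·Δ_{P,n}^{(α+1,β;ℓ)}(x) = α·Δ_{P,n}^{(α,β;ℓ)}(x). -/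
/-- The Jacobi polynomial `P_n^{(α,β)}` via the explicit hypergeometric-type formula. -/
noncomputable def jacobiP (α β : ℝ) (n : ℕ) (x : ℝ) : ℝ :=
  (Real.Gamma (α + n + 1) / ((n.factorial : ℝ) * Real.Gamma (α + β + n + 1))) *
    ∑ k ∈ Finset.range (n + 1),
      (n.choose k : ℝ) * (Real.Gamma (α + β + n + k + 1) / Real.Gamma (α + k + 1)) *
        ((x - 1) / 2) ^ k

/-- The `ℓ`-th finite difference in `n` of the Jacobi polynomials:
`Δ^{(0)}_n = P_n^{(α,β)}`, `Δ^{(ℓ+1)}_n = Δ^{(ℓ)}_{n+1} − Δ^{(ℓ)}_n`. -/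
noncomputable def jacobiDelta (α β : ℝ) : ℕ → ℕ → ℝ → ℝ
  | 0 => fun n => jacobiP α β n
  | (ℓ + 1) => fun n x => jacobiDelta α β ℓ (n + 1) x - jacobiDelta α β ℓ n x

lemma alg (α β N K a b c d f C0 C1 : ℝ)
    (hN : N + 1 ≠ 0) (hv : α + β + N + 1 ≠ 0) (hp : α + K + 1 ≠ 0)
    (hb : b ≠ 0) (hd : d ≠ 0) (hf : f ≠ 0)
    (h2 : C1 * (K + 1) = C0 * (N - K)) :
    (N + 1) * ((α + N + 1) * a / ((N + 1) * f * ((α + β + N + 1) * b)) *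
        ((C0 + C1) * ((α + β + N + K + 1 + 1) * ((α + β + N + K + 1) * c) / ((α + K + 1) * d)))) =
      (N + 1 + α) * (a / (f * b) * (C1 * ((α + β + N + K + 1) * c / ((α + K + 1) * d)))) +
        (2 * N + α + β + 2) * ((α + N + 1) * a / (f * ((α + β + N + 1) * b)) *
          (C0 * ((α + β + N + K + 1) * c / ((α + K + 1) * d)))) := by
  set Q : ℝ := a * c / (f * ((α + β + N + 1) * b) * ((α + K + 1) * d)) with hQ
  have T1 : (N + 1) * ((α + N + 1) * a / ((N + 1) * f * ((α + β + N + 1) * b)) *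
        ((C0 + C1) * ((α + β + N + K + 1 + 1) * ((α + β + N + K + 1) * c) / ((α + K + 1) * d))))
      = ((α + N + 1) * (α + β + N + K + 1 + 1) * (α + β + N + K + 1) * (C0 + C1)) * Q := by
    rw [hQ]; field_simp
  have T2 : (N + 1 + α) * (a / (f * b) * (C1 * ((α + β + N + K + 1) * c / ((α + K + 1) * d))))
      = ((N + 1 + α) * (α + β + N + 1) * C1 * (α + β + N + K + 1)) * Q := by
    rw [hQ]; field_simp
  have T3 : (2 * N + α + β + 2) * ((α + N + 1) * a / (f * ((α + β + N + 1) * b)) *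
          (C0 * ((α + β + N + K + 1) * c / ((α + K + 1) * d))))
      = ((2 * N + α + β + 2) * (α + N + 1) * C0 * (α + β + N + K + 1)) * Q := by
    rw [hQ]; field_simp
  rw [T1, T2, T3]
  linear_combination ((α + N + 1) * (α + β + N + K + 1) * Q) * h2

lemma coeff (α β : ℝ) (hα : -1 < α) (hβ : -1 < β) (n k : ℕ) (hn : 1 ≤ n) :
  ((n:ℝ) + 1) * (Real.Gamma (α + ↑(n + 1) + 1) / (↑(n + 1).factorial * Real.Gamma (α + β + ↑(n + 1) + 1)) * (↑((n + 1).choose (k + 1)) * (Real.Gamma (α + β + ↑(n + 1) + ↑(k + 1) + 1) / Real.Gamma (α + ↑(k + 1) + 1))))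
  = ((n:ℝ) + 1 + α) * (Real.Gamma (α + ↑n + 1) / (↑n.factorial * Real.Gamma (α + β + ↑n + 1)) * (↑(n.choose (k + 1)) * (Real.Gamma (α + β + ↑n + ↑(k + 1) + 1) / Real.Gamma (α + ↑(k + 1) + 1))))
  + (2 * (n:ℝ) + α + β + 2) * (Real.Gamma (α + 1 + ↑n + 1) / (↑n.factorial * Real.Gamma (α + 1 + β + ↑n + 1)) * (↑(n.choose k) * (Real.Gamma (α + 1 + β + ↑n + ↑k + 1) / Real.Gamma (α + 1 + ↑k + 1)))) := by
  have hn' : (1:ℝ) ≤ (n:ℝ) := by exact_mod_cast hn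
  have hk0 : (0:ℝ) ≤ (k:ℝ) := Nat.cast_nonneg k
  have p1 : (0:ℝ) < α + n + 1 := by linarith
  have p2 : (0:ℝ) < α + β + n + 1 := by linarith
  have p3 : (0:ℝ) < α + β + n + k + 1 := by linarith
  have p4 : (0:ℝ) < α + k + 1 := by linarith
  have G : ∀ z : ℝ, 0 < z → Real.Gamma (z + 1) = z * Real.Gamma z := fun z hz => Real.Gamma_add_one hz.ne'
  have hch : ((n + 1).choose (k + 1) : ℝ) = (n.choose k : ℝ) + (n.choose (k+1) : ℝ) := by
    rw [Nat.choose_succ_succ]; push_cast; ring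
  have h2 : ((n.choose (k+1) : ℝ)) * ((k:ℝ) + 1) = (n.choose k : ℝ) * ((n:ℝ) - (k:ℝ)) := by
    rcases le_or_gt k n with h | h
    · have h' : ((n.choose (k+1)) * (k+1) : ℝ) = ((n.choose k) * (n - k) : ℕ) := by
        exact_mod_cast congrArg (Nat.cast : ℕ → ℝ) (Nat.choose_succ_right_eq n k)
      push_cast [Nat.cast_sub h] at h'
      linarith [h']
    · simp [Nat.choose_eq_zero_of_lt h, Nat.choose_eq_zero_of_lt (Nat.lt_succ_of_lt h)]
  simp only [Nat.factorial_succ]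
  push_cast
  rw [hch]
  rw [show α + ((n:ℝ) + 1) + 1 = (α + ↑n + 1) + 1 by ring, G (α + ↑n + 1) p1]
  rw [show α + β + ((n:ℝ) + 1) + 1 = (α + β + ↑n + 1) + 1 by ring, G (α + β + ↑n + 1) p2]
  rw [show α + β + ((n:ℝ) + 1) + ((k:ℝ) + 1) + 1 = ((α + β + ↑n + ↑k + 1) + 1) + 1 by ring,
      G ((α + β + ↑n + ↑k + 1) + 1) (by linarith), G (α + β + ↑n + ↑k + 1) p3]
  rw [show α + ((k:ℝ) + 1) + 1 = (α + ↑k + 1) + 1 by ring, G (α + ↑k + 1) p4]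
  rw [show α + β + (n:ℝ) + ((k:ℝ) + 1) + 1 = (α + β + ↑n + ↑k + 1) + 1 by ring, G (α + β + ↑n + ↑k + 1) p3]
  rw [show α + 1 + (n:ℝ) + 1 = (α + ↑n + 1) + 1 by ring, G (α + ↑n + 1) p1]
  rw [show α + 1 + β + (n:ℝ) + 1 = (α + β + ↑n + 1) + 1 by ring, G (α + β + ↑n + 1) p2]
  rw [show α + 1 + β + (n:ℝ) + (k:ℝ) + 1 = (α + β + ↑n + ↑k + 1) + 1 by ring, G (α + β + ↑n + ↑k + 1) p3]
  rw [show α + 1 + (k:ℝ) + 1 = (α + ↑k + 1) + 1 by ring, G (α + ↑k + 1) p4]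
  have g2 := (Real.Gamma_pos_of_pos p2).ne'
  have g4 := (Real.Gamma_pos_of_pos p4).ne'
  have f0 : ((n.factorial : ℝ)) ≠ 0 := by positivity
  exact alg α β (n:ℝ) (k:ℝ) _ _ _ _ _ _ _ (by linarith) p2.ne' p4.ne' g2 g4 f0 h2

lemma jacobiP_ext (γ β : ℝ) (n : ℕ) (x : ℝ) :
    jacobiP γ β n x = (Real.Gamma (γ + n + 1) / ((n.factorial : ℝ) * Real.Gamma (γ + β + n + 1))) *
    ∑ k ∈ Finset.range (n + 2),
      (n.choose k : ℝ) * (Real.Gamma (γ + β + n + k + 1) / Real.Gamma (γ + k + 1)) *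
        ((x - 1) / 2) ^ k := by
  unfold jacobiP
  rw [Finset.sum_range_succ (n := n+1)]
  simp [Nat.choose_succ_self]

lemma jacobiP_step (α β : ℝ) (hα : -1 < α) (hβ : -1 < β) (n : ℕ) (hn : 1 ≤ n) (x : ℝ) :
    ((n:ℝ)+1) * jacobiP α β (n+1) x
      = ((n:ℝ)+1+α) * jacobiP α β n x
        + (2*(n:ℝ)+α+β+2) * ((x-1)/2) * jacobiP (α+1) β n x := by
  rw [jacobiP_ext α β n x]
  unfold jacobiP
  simp only [Finset.mul_sum]
  rw [Finset.sum_range_succ']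
  rw [Finset.sum_range_succ' (n := n+1)]
  have hsum : ∑ k ∈ Finset.range (n+1),
      (↑n + 1) * (Real.Gamma (α + ↑(n + 1) + 1) / (↑(n + 1).factorial * Real.Gamma (α + β + ↑(n + 1) + 1)) *
        (↑((n + 1).choose (k + 1)) * (Real.Gamma (α + β + ↑(n + 1) + ↑(k + 1) + 1) / Real.Gamma (α + ↑(k + 1) + 1)) *
          ((x - 1) / 2) ^ (k + 1)))
      = ∑ k ∈ Finset.range (n+1),
        ((↑n + 1 + α) * (Real.Gamma (α + ↑n + 1) / (↑n.factorial * Real.Gamma (α + β + ↑n + 1)) *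
          (↑(n.choose (k + 1)) * (Real.Gamma (α + β + ↑n + ↑(k + 1) + 1) / Real.Gamma (α + ↑(k + 1) + 1)) *
            ((x - 1) / 2) ^ (k + 1)))
        + (2 * ↑n + α + β + 2) * ((x - 1) / 2) *
            (Real.Gamma (α + 1 + ↑n + 1) / (↑n.factorial * Real.Gamma (α + 1 + β + ↑n + 1)) *
              (↑(n.choose k) * (Real.Gamma (α + 1 + β + ↑n + ↑k + 1) / Real.Gamma (α + 1 + ↑k + 1)) *
                ((x - 1) / 2) ^ k))) := by
    refine Finset.sum_congr rfl fun k hk => ?_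
    linear_combination (((x-1)/2) ^ (k + 1)) * coeff α β hα hβ n k hn
  rw [hsum, Finset.sum_add_distrib]
  have h0 : (↑n + 1) * (Real.Gamma (α + ↑(n + 1) + 1) / (↑(n + 1).factorial * Real.Gamma (α + β + ↑(n + 1) + 1)) *
        (↑((n + 1).choose 0) * (Real.Gamma (α + β + ↑(n + 1) + ↑(0:ℕ) + 1) / Real.Gamma (α + ↑(0:ℕ) + 1)) *
          ((x - 1) / 2) ^ (0:ℕ)))
      = (↑n + 1 + α) * (Real.Gamma (α + ↑n + 1) / (↑n.factorial * Real.Gamma (α + β + ↑n + 1)) *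
        (↑(n.choose 0) * (Real.Gamma (α + β + ↑n + ↑(0:ℕ) + 1) / Real.Gamma (α + ↑(0:ℕ) + 1)) *
          ((x - 1) / 2) ^ (0:ℕ))) := by
    have hn' : (1:ℝ) ≤ (n:ℝ) := by exact_mod_cast hn
    have p1 : (0:ℝ) < α + n + 1 := by linarith
    have p2 : (0:ℝ) < α + β + n + 1 := by linarith
    have g2 := (Real.Gamma_pos_of_pos p2).ne'
    have f0 : ((n.factorial : ℝ)) ≠ 0 := by positivity
    simp only [Nat.factorial_succ, Nat.choose_zero_right, Nat.cast_zero, add_zero, pow_zero]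
    push_cast
    rw [show α + ((n:ℝ) + 1) + 1 = (α + ↑n + 1) + 1 by ring, Real.Gamma_add_one p1.ne']
    rw [show α + β + ((n:ℝ) + 1) + 1 = (α + β + ↑n + 1) + 1 by ring, Real.Gamma_add_one p2.ne']
    have g5 : Real.Gamma (α + 1) ≠ 0 := (Real.Gamma_pos_of_pos (by linarith : (0:ℝ) < α + 1)).ne'
    have hq : ((n:ℝ) + 1) ≠ 0 := by positivity
    field_simp [p2.ne', hq]
    ring
  rw [h0]
  ring

/-- The recursion for higher differences of Jacobi polynomials. (Here `ℓ - 1` is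
truncated subtraction; the corresponding term carries the factor `ℓ`, so for `ℓ = 0`
it vanishes, matching the convention `Δ^{(−1)} ≡ 0`.) -/
theorem jacobiDelta_recursion (α β : ℝ) (hα : -1 < α) (hβ : -1 < β)
    (ℓ n : ℕ) (hn : 1 ≤ n) (x : ℝ) :
    ((n : ℝ) + 1) * jacobiDelta α β (ℓ + 1) n x + (ℓ : ℝ) * jacobiDelta α β ℓ (n + 1) x +
        (ℓ : ℝ) * (1 - x) * jacobiDelta (α + 1) β (ℓ - 1) (n + 1) x +
        ((n : ℝ) + (α + β) / 2 + 1) * (1 - x) * jacobiDelta (α + 1) β ℓ n x =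
      α * jacobiDelta α β ℓ n x := by
  induction ℓ generalizing n with
  | zero =>
    simp only [jacobiDelta, Nat.cast_zero, Nat.zero_sub, zero_mul, add_zero]
    linear_combination jacobiP_step α β hα hβ n hn x
  | succ m ih =>
    have h1 := ih (n+1) (by omega)
    have h2 := ih n hn
    cases m with
    | zero =>
      simp only [jacobiDelta, Nat.cast_zero, Nat.cast_one, Nat.zero_sub, Nat.succ_sub_one,
        zero_mul, add_zero] at h1 h2 ⊢
      push_cast at h1 h2 ⊢
      linear_combination h1 - h2
    | succ m0 =>
      simp only [jacobiDelta, Nat.succ_sub_one] at h1 h2 ⊢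
      push_cast at h1 h2 ⊢
      linear_combination h1 - h2
end
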